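/- Define κ(q) = q·ψ(q+1) for q ≥ 0, where ψ is the digamma function and γ the Euler–Mascheroni constant. Then κ(q) = -γ q + ∫_{-∞}^0 (e^{qx} - 1 - qx) · e^x/(1-e^x)^2 dx. -/

import Mathlib

open Real MeasureTheory

/-- The digamma function, the logarithmic derivative of the Gamma function. -/
noncomputable def digamma (x : ℝ) : ℝ := deriv (fun y => Real.log (Real.Gamma y)) x


open Real MeasureTheory Set Filter Topology


lemma digamma_partial_tendsto (q : ℝ) (hq : 0 ≤ q) :
    Tendsto (fun N : ℕ => ∑ k ∈ Finset.range N, (1 / ((k : ℝ) + 1) - 1 / (q + (k + 1))))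
      atTop (𝓝 (digamma (q + 1) + Real.eulerMascheroniConstant)) := by
  set f : ℝ → ℝ := Real.log ∘ Real.Gamma with hf
  have hdig : ∀ x : ℝ, digamma x = deriv f x := fun x => rfl
  have hc : ConvexOn ℝ (Ioi 0) f := Real.convexOn_log_Gamma
  have h_rec : ∀ x : ℝ, 0 < x → f (x + 1) = f x + Real.log x := fun x hx => by
    simp only [f, Function.comp_apply, Real.Gamma_add_one hx.ne',
      Real.log_mul hx.ne' (Real.Gamma_pos_of_pos hx).ne', add_comm]
  have hder : ∀ {x : ℝ}, 0 < x → DifferentiableAt ℝ f x := fun {x} hx => by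
    refine ((Real.differentiableAt_Gamma ?_).log (Real.Gamma_ne_zero ?_)) <;>
    exact fun m => ne_of_gt (by have : (0:ℝ) ≤ (m:ℝ) := Nat.cast_nonneg m; linarith)
  have hder_rec : ∀ x : ℝ, 0 < x → deriv f (x + 1) = deriv f x + 1 / x := by
    intro x hx
    rw [← deriv_comp_add_const, one_div, ← Real.deriv_log,
      ← deriv_add (hder <| by positivity) (Real.differentiableAt_log hx.ne')]
    apply Filter.EventuallyEq.deriv_eq
    filter_upwards [eventually_gt_nhds hx] using h_rec
  have iter : ∀ x : ℝ, 0 < x → ∀ n : ℕ,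
      deriv f (x + n) = deriv f x + ∑ k ∈ Finset.range n, 1 / (x + k) := by
    intro x hx n
    induction n with
    | zero => simp
    | succ n ih =>
      have : x + (n + 1 : ℕ) = (x + n) + 1 := by push_cast; ring
      rw [this, hder_rec (x + n) (by positivity), ih, Finset.sum_range_succ]
      ring
  have mono : ∀ a b : ℝ, 0 < a → a ≤ b → deriv f a ≤ deriv f b := by
    intro a b ha hab
    rcases eq_or_lt_of_le hab with rfl | h
    · exact le_rfl
    · exact (hc.deriv_le_slope (mem_Ioi.mpr ha) (mem_Ioi.mpr (ha.trans h)) h (hder ha)).trans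
        (hc.slope_le_deriv (mem_Ioi.mpr ha) (mem_Ioi.mpr (ha.trans h)) h (hder (ha.trans h)))
  have hD1 : deriv f 1 = -Real.eulerMascheroniConstant := by
    have : deriv f 1 = deriv Real.Gamma 1 / Real.Gamma 1 := by
      rw [hf, Function.comp_def]
      exact deriv.log (Real.differentiableAt_Gamma (fun m => by
        have : (0:ℝ) ≤ (m:ℝ) := Nat.cast_nonneg m; intro h; nlinarith))
        (by rw [Real.Gamma_one]; norm_num)
    rw [this, Real.Gamma_one, div_one, Real.eulerMascheroniConstant_eq_neg_deriv, neg_neg]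
  -- b N := deriv f (q+1+N) - deriv f (1+N)
  set m : ℕ := ⌈q⌉₊ with hm
  have hqm : q ≤ m := Nat.le_ceil q
  have hb0 : ∀ N : ℕ, 0 ≤ deriv f (q + 1 + N) - deriv f (1 + N) := by
    intro N
    have := mono (1 + N) (q + 1 + N) (by positivity) (by linarith)
    linarith
  have hbub : ∀ N : ℕ, deriv f (q + 1 + N) - deriv f (1 + N) ≤ m * (1 / ((N : ℝ) + 1)) := by
    intro N
    have h1 : deriv f (q + 1 + N) ≤ deriv f ((1 + N : ℝ) + m) := by
      apply mono _ _ (by positivity)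
      linarith
    have h2 : deriv f ((1 + N : ℝ) + m)
        = deriv f (1 + (N:ℝ)) + ∑ k ∈ Finset.range m, 1 / (1 + (N:ℝ) + (k:ℝ)) :=
      iter (1 + N) (by positivity) m
    have h3 : ∑ k ∈ Finset.range m, 1 / (1 + (N : ℝ) + (k:ℝ)) ≤ (m:ℝ) * (1 / ((N : ℝ) + 1)) := by
      calc ∑ k ∈ Finset.range m, 1 / (1 + (N : ℝ) + (k:ℝ))
          ≤ ∑ _k ∈ Finset.range m, 1 / ((N : ℝ) + 1) := by
            apply Finset.sum_le_sum
            intro k _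
            apply one_div_le_one_div_of_le (by positivity)
            have : (0 : ℝ) ≤ (k:ℝ) := Nat.cast_nonneg k
            linarith
        _ = (m:ℝ) * (1 / ((N : ℝ) + 1)) := by
            rw [Finset.sum_const, Finset.card_range, nsmul_eq_mul]
    linarith
  have hbtend : Tendsto (fun N : ℕ => deriv f (q + 1 + N) - deriv f (1 + N)) atTop (𝓝 0) := by
    apply squeeze_zero hb0 hbub
    rw [show (0 : ℝ) = m * 0 by ring]
    exact tendsto_one_div_add_atTop_nhds_zero_nat.const_mul _
  have key : ∀ N : ℕ, ∑ k ∈ Finset.range N, (1 / ((k : ℝ) + 1) - 1 / (q + (k + 1)))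
      = deriv f (q + 1) + Real.eulerMascheroniConstant
        - (deriv f (q + 1 + N) - deriv f (1 + N)) := by
    intro N
    have h1 : deriv f ((1 : ℝ) + N) = deriv f 1 + ∑ k ∈ Finset.range N, 1 / (1 + (k : ℝ)) :=
      iter 1 one_pos N
    have h2 : deriv f (q + 1 + N) = deriv f (q + 1) + ∑ k ∈ Finset.range N, 1 / (q + 1 + k) :=
      iter (q + 1) (by positivity) N
    rw [Finset.sum_sub_distrib]
    rw [show ∑ k ∈ Finset.range N, 1 / ((k : ℝ) + 1) = ∑ k ∈ Finset.range N, 1 / (1 + (k : ℝ))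
      from Finset.sum_congr rfl fun k _ => by rw [add_comm]]
    rw [show ∑ k ∈ Finset.range N, 1 / (q + ((k : ℝ) + 1)) = ∑ k ∈ Finset.range N, 1 / (q + 1 + k)
      from Finset.sum_congr rfl fun k _ => by ring_nf]
    rw [eq_sub_iff_add_eq]
    have := hD1
    linarith [h1, h2]
  rw [show digamma (q + 1) + Real.eulerMascheroniConstant
      = deriv f (q + 1) + Real.eulerMascheroniConstant - 0 by rw [hdig]; ring]
  simp_rw [key]
  exact (tendsto_const_nhds.sub hbtend)

open Real MeasureTheory Set Filter Topology

/-- summand -/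
noncomputable def Faux (q : ℝ) (n : ℕ) (y : ℝ) : ℝ :=
  (Real.exp (-(q * y)) - 1 + q * y) * ((n : ℝ) * Real.exp (-((n : ℝ) * y)))

lemma Faux_nonneg (q : ℝ) (hq : 0 ≤ q) (n : ℕ) (y : ℝ) (hy : 0 ≤ y) : 0 ≤ Faux q n y := by
  have h1 : (-(q * y)) + 1 ≤ Real.exp (-(q * y)) := Real.add_one_le_exp _
  have h2 : (0:ℝ) ≤ (n : ℝ) * Real.exp (-((n : ℝ) * y)) := by positivity
  have : 0 ≤ Real.exp (-(q * y)) - 1 + q * y := by linarith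
  exact mul_nonneg this h2

lemma Faux_continuous (q : ℝ) (n : ℕ) : Continuous (Faux q n) := by
  unfold Faux; fun_prop

lemma Faux_integral (q : ℝ) (hq : 0 ≤ q) (n : ℕ) :
    (∫ y in Ioi (0:ℝ), Faux q n y = q ^ 2 / (n * ((n : ℝ) + q)))
      ∧ IntegrableOn (Faux q n) (Ioi (0:ℝ)) := by
  rcases Nat.eq_zero_or_pos n with rfl | hn
  · have h0 : Faux q 0 = fun _ => (0:ℝ) := by
      funext y; simp [Faux]
    constructor
    · rw [h0]; simp
    · rw [h0]; exact integrableOn_zero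
  · set c : ℝ := (n : ℝ) with hc
    have hcpos : 0 < c := Nat.cast_pos.mpr hn
    have hqc : 0 < q + c := by linarith
    set A : ℝ → ℝ := fun y => -(c / (q + c)) * Real.exp (-((q + c) * y))
      + Real.exp (-(c * y)) - q * y * Real.exp (-(c * y)) - (q / c) * Real.exp (-(c * y)) with hA
    have hderiv : ∀ y : ℝ, y ∈ Ici (0:ℝ) → HasDerivAt A (Faux q n y) y := by
      intro y _
      have e1 : HasDerivAt (fun y : ℝ => Real.exp (-((q + c) * y)))
          (Real.exp (-((q + c) * y)) * -(q + c)) y := by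
        simpa using (((hasDerivAt_id y).const_mul (q + c)).neg).exp
      have e2 : HasDerivAt (fun y : ℝ => Real.exp (-(c * y)))
          (Real.exp (-(c * y)) * -c) y := by
        simpa using (((hasDerivAt_id y).const_mul c).neg).exp
      have e3 : HasDerivAt (fun y : ℝ => q * y) q y := by
        simpa using (hasDerivAt_id y).const_mul q
      have h := (((e1.const_mul (-(c / (q + c)))).add e2).sub (e3.mul e2)).sub
        (e2.const_mul (q / c))
      have hE : Real.exp (-((q + c) * y)) = Real.exp (-(q * y)) * Real.exp (-(c * y)) := by
        rw [← Real.exp_add]; ring_nf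
      refine h.congr_deriv ?_
      simp only [Faux, ← hc, hE]
      field_simp
      ring
    have hnonneg : ∀ y ∈ Ioi (0:ℝ), 0 ≤ Faux q n y := fun y hy =>
      Faux_nonneg q hq n y (le_of_lt hy)
    have htend : Tendsto A atTop (𝓝 0) := by
      have t1 : Tendsto (fun y : ℝ => Real.exp (-((q + c) * y))) atTop (𝓝 0) :=
        Real.tendsto_exp_neg_atTop_nhds_zero.comp (tendsto_id.const_mul_atTop hqc)
      have t2 : Tendsto (fun y : ℝ => Real.exp (-(c * y))) atTop (𝓝 0) :=
        Real.tendsto_exp_neg_atTop_nhds_zero.comp (tendsto_id.const_mul_atTop hcpos)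
      have t3 : Tendsto (fun y : ℝ => q * y * Real.exp (-(c * y))) atTop (𝓝 0) := by
        have h := (Real.tendsto_pow_mul_exp_neg_atTop_nhds_zero 1).comp
          (tendsto_id.const_mul_atTop hcpos (f := fun y : ℝ => y))
        have h2 := h.const_mul (q / c)
        rw [mul_zero] at h2
        apply h2.congr
        intro y
        simp only [Function.comp_apply, pow_one, id]
        field_simp
      have h5 := (((t1.const_mul (-(c / (q + c)))).add t2).sub t3).sub (t2.const_mul (q / c))
      rw [hA]
      simpa only [mul_zero, add_zero, sub_zero, zero_add] using h5
    constructor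
    · rw [integral_Ioi_of_hasDerivAt_of_nonneg' hderiv hnonneg htend]
      simp only [A, mul_zero, neg_zero, Real.exp_zero, mul_one, zero_mul]
      field_simp
      ring
    · exact integrableOn_Ioi_deriv_of_nonneg' hderiv hnonneg htend

lemma summable_aux (q : ℝ) (hq : 0 ≤ q) :
    Summable (fun n : ℕ => q ^ 2 / (n * ((n : ℝ) + q))) := by
  have hs : Summable (fun n : ℕ => q ^ 2 * (1 / (n : ℝ) ^ 2)) :=
    (Real.summable_one_div_nat_pow.mpr one_lt_two).mul_left _
  apply Summable.of_nonneg_of_le (fun n => by positivity) _ hs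
  intro n
  rcases Nat.eq_zero_or_pos n with rfl | hn
  · simp
  · have hn' : (0:ℝ) < n := Nat.cast_pos.mpr hn
    rw [mul_one_div]
    apply div_le_div_of_nonneg_left (by positivity) (by positivity)
    nlinarith

lemma integral_repr (q : ℝ) (hq : 0 ≤ q) :
    (∫ x in Iio (0:ℝ), (Real.exp (q * x) - 1 - q * x) * (Real.exp x / (1 - Real.exp x) ^ 2))
      = ∑' n : ℕ, q ^ 2 / (n * ((n : ℝ) + q)) := by
  set g : ℝ → ℝ := fun x => (Real.exp (q * x) - 1 - q * x) * (Real.exp x / (1 - Real.exp x) ^ 2)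
    with hg
  have step1 : (∫ x in Iio (0:ℝ), g x) = ∫ y in Ioi (0:ℝ), g (-y) := by
    have h := integral_comp_neg_Ioi (0:ℝ) g
    rw [neg_zero] at h
    rw [← integral_Iic_eq_integral_Iio, ← h]
  have hF_eq : ∀ y ∈ Ioi (0:ℝ), g (-y) = ∑' n : ℕ, Faux q n y := by
    intro y hy
    have hy' : 0 < y := hy
    have hr : ‖Real.exp (-y)‖ < 1 := by
      rw [Real.norm_eq_abs, abs_of_pos (Real.exp_pos _)]
      exact Real.exp_lt_one_iff.mpr (by linarith)
    have hgeo := tsum_coe_mul_geometric_of_norm_lt_one hr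
    have hterm : ∀ n : ℕ, Faux q n y
        = (Real.exp (-(q * y)) - 1 + q * y) * ((n : ℝ) * Real.exp (-y) ^ n) := by
      intro n
      have : Real.exp (-((n : ℝ) * y)) = Real.exp (-y) ^ n := by
        rw [← Real.exp_nat_mul]; ring_nf
      rw [Faux, this]
    rw [tsum_congr hterm, tsum_mul_left, hgeo, hg]
    simp only [mul_neg]
    ring
  have hFi := fun n => Faux_integral q hq n
  have step2 : (∫ y in Ioi (0:ℝ), g (-y)) = ∫ y in Ioi (0:ℝ), ∑' n : ℕ, Faux q n y :=
    setIntegral_congr_fun measurableSet_Ioi hF_eq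
  have step3 : (∫ y in Ioi (0:ℝ), ∑' n : ℕ, Faux q n y)
      = ∑' n : ℕ, ∫ y in Ioi (0:ℝ), Faux q n y := by
    apply MeasureTheory.integral_tsum
    · exact fun n => ((Faux_continuous q n).aestronglyMeasurable).restrict
    · have hlin : ∀ n : ℕ, (∫⁻ y in Ioi (0:ℝ), ‖Faux q n y‖ₑ)
          = ENNReal.ofReal (q ^ 2 / (n * ((n : ℝ) + q))) := by
        intro n
        have h1 : (∫⁻ y in Ioi (0:ℝ), ‖Faux q n y‖ₑ)
            = ∫⁻ y in Ioi (0:ℝ), ENNReal.ofReal (Faux q n y) := by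
          apply setLIntegral_congr_fun measurableSet_Ioi
          exact fun y (hy : y ∈ Ioi (0:ℝ)) => Real.enorm_eq_ofReal (Faux_nonneg q hq n y hy.le)
        rw [h1, ← ofReal_integral_eq_lintegral_ofReal (hFi n).2
          ((ae_restrict_iff' measurableSet_Ioi).mpr
            (ae_of_all _ fun y hy => Faux_nonneg q hq n y hy.le)), (hFi n).1]
      rw [tsum_congr hlin, ← ENNReal.ofReal_tsum_of_nonneg (fun n => by positivity)
        (summable_aux q hq)]
      exact ENNReal.ofReal_ne_top
  rw [step1, step2, step3, tsum_congr (fun n => (hFi n).1)]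
open Real MeasureTheory Set Filter Topology

/-- Lévy–Khintchine representation of `κ(q) = q ψ(q+1)`:
`κ(q) = -γ q + ∫_{-∞}^0 (e^{qx} - 1 - qx) e^x/(1-e^x)^2 dx`. -/
theorem stmt_3 (q : ℝ) (hq : 0 ≤ q) :
    q * digamma (q + 1) =
      -Real.eulerMascheroniConstant * q +
        ∫ x in Set.Iio (0:ℝ),
          (Real.exp (q * x) - 1 - q * x) * (Real.exp x / (1 - Real.exp x) ^ 2) := by
  have hint := integral_repr q hq
  have hnn : ∀ n : ℕ, 0 ≤ q ^ 2 / (n * ((n : ℝ) + q)) := fun n => by positivity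
  have htend : Tendsto (fun N : ℕ => ∑ n ∈ Finset.range N, q ^ 2 / (n * ((n : ℝ) + q)))
      atTop (𝓝 (q * (digamma (q + 1) + Real.eulerMascheroniConstant))) := by
    rw [← tendsto_add_atTop_iff_nat 1]
    have hps : ∀ N : ℕ, ∑ n ∈ Finset.range (N + 1), q ^ 2 / (n * ((n : ℝ) + q))
        = q * ∑ k ∈ Finset.range N, (1 / ((k : ℝ) + 1) - 1 / (q + (k + 1))) := by
      intro N
      rw [Finset.sum_range_succ', Finset.mul_sum]
      simp only [Nat.cast_zero, zero_mul, div_zero, add_zero, Nat.cast_add, Nat.cast_one]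
      apply Finset.sum_congr rfl
      intro k _
      have hk : (0:ℝ) < (k : ℝ) + 1 := by positivity
      have hk2 : (0:ℝ) < q + ((k : ℝ) + 1) := by positivity
      field_simp
      ring
    simp only [hps]
    exact (digamma_partial_tendsto q hq).const_mul q
  have hsum : (∑' n : ℕ, q ^ 2 / (n * ((n : ℝ) + q)))
      = q * (digamma (q + 1) + Real.eulerMascheroniConstant) :=
    ((hasSum_iff_tendsto_nat_of_nonneg hnn _).mpr htend).tsum_eq
  rw [hint, hsum]
  ring
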